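/- Let ν_t(ξ, η) = (δ_X ξ + tT′η, −δ_Y η) define the operator ∇_t = [[δ_X, tT′],[0, −δ_Y]] on E_X ⊕ E_Y, where T intertwines δ_X and δ_Y and [T′] : Ker(δ_Y)/Im(δ_Y) → Ker(δ_X)/Im(δ_X) is an isomorphism. Then for every t > 0, Ker(∇_t) = Im(∇_t). -/

import Mathlib

open ContinuousLinearMap

/-- (Hilbert modules specialised to Hilbert spaces.)
Let `∇_t (ξ, η) = (δ_X ξ + t T′ η, −δ_Y η)` on `E_X ⊕ E_Y`, where `T` intertwines
`δ_X, δ_Y`, `T′` its `Q`-adjoint intertwines `δ_Y, δ_X` and induces an isomorphism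
`Ker(δ_Y)/Im(δ_Y) → Ker(δ_X)/Im(δ_X)`.  Then for every `t > 0`,
`Ker(∇_t) = Im(∇_t)`. -/
theorem ker_nabla_eq_im_nabla
    {EX EY : Type*} [NormedAddCommGroup EX] [InnerProductSpace ℂ EX]
    [NormedAddCommGroup EY] [InnerProductSpace ℂ EY]
    (δX : EX →L[ℂ] EX) (δY : EY →L[ℂ] EY)
    (T : EX →L[ℂ] EY) (T' : EY →L[ℂ] EX)
    (hδX2 : δX ∘L δX = 0) (hδY2 : δY ∘L δY = 0)
    (hT : T ∘L δX = δY ∘L T) (hT' : T' ∘L δY = δX ∘L T')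
    -- `[T′]` is injective on cohomology:
    (hinj : ∀ y ∈ LinearMap.ker (δY : EY →ₗ[ℂ] EY), T' y ∈ LinearMap.range (δX : EX →ₗ[ℂ] EX) → y ∈ LinearMap.range (δY : EY →ₗ[ℂ] EY))
    -- `[T′]` is surjective on cohomology:
    (hsurj : ∀ x ∈ LinearMap.ker (δX : EX →ₗ[ℂ] EX), ∃ y ∈ LinearMap.ker (δY : EY →ₗ[ℂ] EY), x - T' y ∈ LinearMap.range (δX : EX →ₗ[ℂ] EX))
    (t : ℝ) (ht : 0 < t) :
    ∀ p : EX × EY,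
      (δX p.1 + (t : ℂ) • T' p.2, -(δY p.2)) = (0 : EX × EY) ↔
        ∃ q : EX × EY, (δX q.1 + (t : ℂ) • T' q.2, -(δY q.2)) = p := by
  have htc : (t : ℂ) ≠ 0 := by exact_mod_cast ht.ne'
  have hX2 : ∀ v : EX, δX (δX v) = 0 := fun v => by
    have := DFunLike.congr_fun hδX2 v; simpa using this
  have hY2 : ∀ v : EY, δY (δY v) = 0 := fun v => by
    have := DFunLike.congr_fun hδY2 v; simpa using this
  have hT'v : ∀ v : EY, T' (δY v) = δX (T' v) := fun v => by
    have := DFunLike.congr_fun hT' v; simpa using this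
  rintro ⟨x, y⟩
  constructor
  · rintro h
    rw [Prod.mk_eq_zero] at h
    obtain ⟨h1, h2⟩ := h
    have hy : δY y = 0 := by rwa [neg_eq_zero] at h2
    have hδXx : δX x = -((t : ℂ) • T' y) := by
      rw [eq_neg_iff_add_eq_zero]; exact h1
    have hTy : T' y ∈ LinearMap.range (δX : EX →ₗ[ℂ] EX) := by
      refine ⟨-(t : ℂ)⁻¹ • x, ?_⟩
      show δX (-(t : ℂ)⁻¹ • x) = T' y
      rw [map_smul, hδXx, smul_neg, neg_smul, neg_neg, smul_smul,
        inv_mul_cancel₀ htc, one_smul]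
    obtain ⟨b₀, hb₀⟩ := hinj y (LinearMap.mem_ker.mpr hy) hTy
    have hb₀' : δY b₀ = y := hb₀
    set z := x + (t : ℂ) • T' b₀ with hz_def
    have hz : δX z = 0 := by
      rw [hz_def, map_add, map_smul, ← hT'v, hb₀', hδXx]
      abel
    obtain ⟨w, hw, a₀, ha₀⟩ := hsurj z (LinearMap.mem_ker.mpr hz)
    have hw' : δY w = 0 := hw
    refine ⟨(a₀, -b₀ + (t : ℂ)⁻¹ • w), ?_⟩
    rw [Prod.mk.injEq]
    constructor
    · rw [show δX a₀ = z - T' w from ha₀, map_add, map_neg, map_smul, smul_add, smul_neg, smul_smul,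
        mul_inv_cancel₀ htc, one_smul, hz_def]
      abel
    · rw [map_add, map_neg, map_smul, hw', hb₀', smul_zero, add_zero, neg_neg]
  · rintro ⟨⟨a, b⟩, h⟩
    rw [Prod.mk.injEq] at h
    obtain ⟨h1, h2⟩ := h
    rw [Prod.mk_eq_zero]
    constructor
    · rw [← h1, ← h2, map_add, map_smul, hX2, map_neg, ← hT'v]
      simp
    · rw [← h2, map_neg, hY2]; simp
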